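/- A bounded operator C : L²(𝕋) → H_Z is of the form C = C_F for some F ∈ H_Z satisfying M̃(F) = F if and only if it satisfies the two intertwining relations: (a) C S₀ = Ũ C; and (b) C τ(f) = π_Z(f) C for all f ∈ L^∞(𝕋), where (τ(f)α)(z) = f(z)α(z) is multiplication on L²(𝕋). -/

import Mathlib

open MeasureTheory Complex Real Filter Topology

noncomputable section

/-- The normalized Haar measure `μ` of the circle `𝕋`, realized on the fundamental
domain `(0, 2π]` of `ℝ` via the identification `z = e^{-iω}`. -/
def muT : Measure ℝ := (ENNReal.ofReal (2 * π))⁻¹ • (volume.restrict (Set.Ioc 0 (2 * π)))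

/-- The measure on `𝕋 × [0,1]` underlying the Hilbert space `H_Z` (Zak-transform side). -/
def muZ : Measure (ℝ × ℝ) := muT.prod (volume.restrict (Set.Ioc 0 1))

/-- `L²(𝕋)`. -/
abbrev L2T : Type := MeasureTheory.Lp ℂ 2 muT

/-- The Hilbert space `H_Z ≃ L²(𝕋 × [0,1])`, the range of the Zak transform. -/
abbrev HZ : Type := MeasureTheory.Lp ℂ 2 muZ

/-- Quasi-periodicity characterizing membership of a function in `H_Z`:
`2π`-periodicity in the `ω`-coordinate and `H(z, x + n) = z^{-n} H(z, x)`,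
i.e. `H(ω, x + n) = e^{inω} H(ω, x)`. -/
def QP (H : ℝ × ℝ → ℂ) : Prop :=
  (∀ ω x : ℝ, H (ω + 2 * π, x) = H (ω, x)) ∧
    ∀ (ω x : ℝ) (n : ℤ),
      H (ω, x + (n : ℝ)) = Complex.exp (Complex.I * (n : ℂ) * (ω : ℂ)) * H (ω, x)

/-- `T = π_Z(m)`, multiplication by `m(z)` on `H_Z`. -/
def IsMulOp (m : ℝ → ℂ) (T : HZ →L[ℂ] HZ) : Prop :=
  ∀ H : HZ, ⇑(T H) =ᵐ[muZ] fun p : ℝ × ℝ => m p.1 * (⇑H) p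

/-- `Ut` is the unitary `Ũ` on `H_Z`:
`(ŨH)(z,x) = 2^{-1/2} (H(z², x/2) + z·H(z², (x+1)/2))`, characterized on quasi-periodic
representatives (`z = e^{-iω}`). -/
def IsUt (Ut : HZ ≃ₗᵢ[ℂ] HZ) : Prop :=
  ∀ H : ℝ × ℝ → ℂ, Measurable H → QP H →
    ∀ hH : MeasureTheory.MemLp H 2 muZ,
      ⇑(Ut (hH.toLp H)) =ᵐ[muZ] fun p : ℝ × ℝ =>
        ((Real.sqrt 2 : ℝ) : ℂ)⁻¹ *
          (H (2 * p.1, p.2 / 2) +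
            Complex.exp (-(Complex.I * (p.1 : ℂ))) * H (2 * p.1, (p.2 + 1) / 2))

/-- `S` is the operator `(Sf)(z) = m(z) f(z²)` on `L²(𝕋)`, characterized on
`2π`-periodic representatives. -/
def IsSOp (m : ℝ → ℂ) (S : L2T →L[ℂ] L2T) : Prop :=
  ∀ f : ℝ → ℂ, Measurable f → (∀ ω, f (ω + 2 * π) = f ω) →
    ∀ hf : MeasureTheory.MemLp f 2 muT,
      ⇑(S (hf.toLp f)) =ᵐ[muT] fun ω : ℝ => m ω * f (2 * ω)

-- helpers
def per (ω : ℝ) : ℝ := ω - 2 * π * (⌈ω / (2 * π)⌉ : ℤ) + 2 * π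

lemma per_mem (ω : ℝ) : per ω ∈ Set.Ioc 0 (2 * π) := by
  have h1 : ω / (2 * π) ≤ (⌈ω / (2 * π)⌉ : ℝ) := Int.le_ceil _
  have h2 : ((⌈ω / (2 * π)⌉ : ℤ) : ℝ) < ω / (2 * π) + 1 := Int.ceil_lt_add_one _
  have hp := Real.two_pi_pos
  constructor
  · have := (mul_lt_mul_of_pos_left h2 hp)
    rw [mul_add, mul_div_cancel₀ _ hp.ne'] at this
    unfold per; nlinarith
  · have := (mul_le_mul_of_nonneg_left h1 hp.le)
    rw [mul_div_cancel₀ _ hp.ne'] at this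
    unfold per; nlinarith

lemma per_eq_self {ω : ℝ} (h : ω ∈ Set.Ioc 0 (2 * π)) : per ω = ω := by
  have hp := Real.two_pi_pos
  have : ⌈ω / (2 * π)⌉ = 1 := by
    rw [Int.ceil_eq_iff]
    refine ⟨by push_cast; simpa using div_pos h.1 hp, ?_⟩
    push_cast
    rw [div_le_one hp]; exact h.2
  unfold per; rw [this]; push_cast; ring

lemma per_add (ω : ℝ) : per (ω + 2 * π) = per ω := by
  have hp := Real.two_pi_pos
  have : (ω + 2 * π) / (2 * π) = ω / (2 * π) + 1 := by field_simp
  unfold per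
  rw [this]
  rw [show (ω / (2 * π) + 1 : ℝ) = ω / (2 * π) + (1:ℤ) by push_cast; ring, Int.ceil_add_intCast]
  push_cast; ring

lemma measurable_intCast_real : Measurable (fun k : ℤ => (k : ℝ)) := measurable_from_top
lemma measurable_intCast_complex : Measurable (fun k : ℤ => (k : ℂ)) := measurable_from_top

lemma measurable_per : Measurable per := by
  unfold per
  exact (measurable_id.sub (measurable_const.mul
    (measurable_intCast_real.comp (measurable_id.div_const _).ceil))).add_const _

instance : IsFiniteMeasure muT := by
  constructor
  rw [muT, Measure.smul_apply, Measure.restrict_apply MeasurableSet.univ]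
  simp only [Set.univ_inter, Real.volume_Ioc, smul_eq_mul]
  exact ENNReal.mul_lt_top (ENNReal.inv_lt_top.mpr (by positivity)) ENNReal.ofReal_lt_top

lemma muT_ae_mem : ∀ᵐ ω ∂muT, ω ∈ Set.Ioc 0 (2 * π) := by
  rw [muT]
  exact Measure.ae_smul_measure (ae_restrict_mem measurableSet_Ioc) _

lemma muZ_ae_mem : ∀ᵐ p ∂muZ, p.1 ∈ Set.Ioc 0 (2 * π) ∧ p.2 ∈ Set.Ioc 0 1 := by
  rw [ae_iff]
  have hset : {p : ℝ × ℝ | ¬(p.1 ∈ Set.Ioc 0 (2 * π) ∧ p.2 ∈ Set.Ioc 0 1)}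
      = (Set.Ioc (0:ℝ) (2*π) ×ˢ Set.Ioc (0:ℝ) 1)ᶜ := by
    ext p; simp [Set.mem_prod, not_and_or]
  rw [hset, Set.compl_prod_eq_union]
  refine measure_union_null ?_ ?_
  · rw [muZ, Measure.prod_prod]
    have : muT (Set.Ioc (0:ℝ) (2*π))ᶜ = 0 := by
      rw [muT, Measure.smul_apply, Measure.restrict_apply (measurableSet_Ioc.compl)]
      simp
    rw [this, zero_mul]
  · rw [muZ, Measure.prod_prod]
    have : (volume.restrict (Set.Ioc (0:ℝ) 1)) (Set.Ioc (0:ℝ) 1)ᶜ = 0 := by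
      rw [Measure.restrict_apply (measurableSet_Ioc.compl)]; simp
    rw [this, mul_zero]

def extQP (G : ℝ × ℝ → ℂ) : ℝ × ℝ → ℂ := fun p =>
  Complex.exp (Complex.I * ((⌈p.2⌉ - 1 : ℤ) : ℂ) * (p.1 : ℂ)) *
    G (per p.1, p.2 - ((⌈p.2⌉ - 1 : ℤ) : ℝ))

lemma extQP_meas {G : ℝ × ℝ → ℂ} (hG : Measurable G) : Measurable (extQP G) := by
  have hc : Measurable (fun p : ℝ × ℝ => (⌈p.2⌉ - 1 : ℤ)) :=
    measurable_snd.ceil.sub measurable_const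
  apply Measurable.mul
  · exact Complex.measurable_exp.comp
      ((measurable_const.mul (measurable_intCast_complex.comp hc)).mul
        (Complex.measurable_ofReal.comp measurable_fst))
  · exact hG.comp ((measurable_per.comp measurable_fst).prodMk
      (measurable_snd.sub (measurable_intCast_real.comp hc)))

lemma extQP_qp (G : ℝ × ℝ → ℂ) : QP (extQP G) := by
  constructor
  · intro ω x
    unfold extQP
    simp only [per_add]
    congr 1
    rw [Complex.ofReal_add]
    have h : Complex.I * ((⌈x⌉ - 1 : ℤ) : ℂ) * ((ω:ℂ) + ((2*π:ℝ):ℂ))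
        = Complex.I * ((⌈x⌉ - 1 : ℤ) : ℂ) * (ω:ℂ) + ((⌈x⌉ - 1 : ℤ) : ℂ) * (2 * (π:ℂ) * Complex.I) := by
      push_cast; ring
    rw [h, Complex.exp_add, Complex.exp_int_mul_two_pi_mul_I, mul_one]
  · intro ω x n
    unfold extQP
    simp only [show x + (n:ℝ) = x + ((n:ℤ):ℝ) by norm_num, Int.ceil_add_intCast]
    have h1 : (x : ℝ) + (n:ℤ) - ((⌈x⌉ + n - 1 : ℤ) : ℝ) = x - ((⌈x⌉ - 1 : ℤ) : ℝ) := by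
      push_cast; ring
    have h2 : Complex.I * ((⌈x⌉ + n - 1 : ℤ) : ℂ) * (ω:ℂ)
        = Complex.I * (n:ℂ) * (ω:ℂ) + Complex.I * ((⌈x⌉ - 1 : ℤ) : ℂ) * (ω:ℂ) := by
      push_cast; ring
    rw [h1, h2, Complex.exp_add, mul_assoc]


/-- Corollary 4.8: a bounded operator `C : L²(𝕋) → H_Z` is of the form
`C = C_F` for some `F ∈ H_Z` with `M̃(F) = F` if and only if
(a) `C S₀ = Ũ C`, and (b) `C τ(f) = π_Z(f) C` for all `f ∈ L^∞(𝕋)`, where `τ(f)` is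
multiplication by `f` on `L²(𝕋)`. -/
theorem intertwiner_iff_of_scaling_form
    (m₀ : ℝ → ℂ)
    (hm_meas : Measurable m₀) (hm_bdd : ∃ C, ∀ ω, ‖m₀ ω‖ ≤ C)
    (hm_per : ∀ ω, m₀ (ω + 2 * π) = m₀ ω)
    (hm_quad : ∀ᵐ ω ∂(volume : Measure ℝ), ‖m₀ ω‖ ^ 2 + ‖m₀ (ω + π)‖ ^ 2 = 2)
    (Ut : HZ ≃ₗᵢ[ℂ] HZ) (hUt : IsUt Ut)
    (Tm : HZ →L[ℂ] HZ) (hTm : IsMulOp m₀ Tm)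
    (S₀ : L2T →L[ℂ] L2T) (hS₀ : IsSOp m₀ S₀)
    (PiZ : (ℝ → ℂ) → HZ →L[ℂ] HZ)
    (hPiZ : ∀ f : ℝ → ℂ, Measurable f → (∃ c, ∀ ω, ‖f ω‖ ≤ c) →
      ∀ H : HZ, ⇑(PiZ f H) =ᵐ[muZ] fun p : ℝ × ℝ => f p.1 * (⇑H) p)
    (Tau : (ℝ → ℂ) → L2T →L[ℂ] L2T)
    (hTau : ∀ f : ℝ → ℂ, Measurable f → (∃ c, ∀ ω, ‖f ω‖ ≤ c) →
      ∀ α : L2T, ⇑(Tau f α) =ᵐ[muT] fun ω : ℝ => f ω * (⇑α) ω)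
    (C : L2T →L[ℂ] HZ) :
    (∃ (F : ℝ × ℝ → ℂ) (hF_mem : MeasureTheory.MemLp F 2 muZ),
      Measurable F ∧ QP F ∧
        Ut.symm (Tm (hF_mem.toLp F)) = hF_mem.toLp F ∧
        ∀ (α : ℝ → ℂ), Measurable α → ∀ hα : MeasureTheory.MemLp α 2 muT,
          ⇑(C (hα.toLp α)) =ᵐ[muZ] fun p : ℝ × ℝ => α p.1 * F p) ↔
      ((∀ α : L2T, C (S₀ α) = Ut (C α)) ∧
        ∀ f : ℝ → ℂ, Measurable f → (∃ c, ∀ ω, ‖f ω‖ ≤ c) →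
          (∀ ω, f (ω + 2 * π) = f ω) →
            ∀ α : L2T, C (Tau f α) = PiZ f (C α)) := by
  constructor
  · -- forward direction
    rintro ⟨F, hF_mem, hFmeas, hFQP, hFfix, hC⟩
    have hTmUt : Tm (hF_mem.toLp F) = Ut (hF_mem.toLp F) := by
      have h := congrArg Ut hFfix
      rwa [LinearIsometryEquiv.apply_symm_apply] at h
    have key : (fun p : ℝ × ℝ => m₀ p.1 * F p) =ᵐ[muZ] fun p : ℝ × ℝ =>
        ((Real.sqrt 2 : ℝ) : ℂ)⁻¹ *
          (F (2 * p.1, p.2 / 2) +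
            Complex.exp (-(Complex.I * (p.1 : ℂ))) * F (2 * p.1, (p.2 + 1) / 2)) := by
      have h1 := hTm (hF_mem.toLp F)
      have h2 := hUt F hFmeas hFQP hF_mem
      have h3 : ⇑(hF_mem.toLp F) =ᵐ[muZ] F := hF_mem.coeFn_toLp
      have h4 : (fun p : ℝ × ℝ => m₀ p.1 * F p) =ᵐ[muZ]
          fun p : ℝ × ℝ => m₀ p.1 * (hF_mem.toLp F) p := by
        filter_upwards [h3] with p hp; rw [hp]
      refine h4.trans (h1.symm.trans ?_)
      rw [hTmUt]; exact h2
    have rep : ∀ g : L2T, ∃ α : ℝ → ℂ, Measurable α ∧ (∀ ω, α (ω + 2 * π) = α ω) ∧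
        ∃ hα : MemLp α 2 muT, hα.toLp α = g := by
      intro g
      set α₀ := (Lp.aestronglyMeasurable g).mk ⇑g with hα₀def
      have hα₀m : Measurable α₀ :=
        (Lp.aestronglyMeasurable g).stronglyMeasurable_mk.measurable
      have heq : ⇑g =ᵐ[muT] α₀ := (Lp.aestronglyMeasurable g).ae_eq_mk
      have hper : (fun ω => α₀ (per ω)) =ᵐ[muT] α₀ := by
        filter_upwards [muT_ae_mem] with ω h; rw [per_eq_self h]
      have hmem : MemLp (fun ω => α₀ (per ω)) 2 muT :=
        (Lp.memLp g).ae_eq (heq.trans hper.symm)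
      exact ⟨fun ω => α₀ (per ω), hα₀m.comp measurable_per,
        fun ω => by show α₀ (per (ω + 2 * π)) = α₀ (per ω); rw [per_add], hmem,
        Lp.ext (hmem.coeFn_toLp.trans (hper.trans heq.symm))⟩
    constructor
    · intro g
      obtain ⟨α, hαm, hαper, hα, hg⟩ := rep g
      have hCg : ⇑(C g) =ᵐ[muZ] fun p : ℝ × ℝ => α p.1 * F p := by
        rw [← hg]; exact hC α hαm hα
      have hHmeas : Measurable (fun p : ℝ × ℝ => α p.1 * F p) :=
        (hαm.comp measurable_fst).mul hFmeas
      have hHQP : QP (fun p : ℝ × ℝ => α p.1 * F p) := by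
        constructor
        · intro ω x; simp only; rw [hαper, hFQP.1]
        · intro ω x n; simp only; rw [hFQP.2 ω x n]; ring
      have hHmem : MemLp (fun p : ℝ × ℝ => α p.1 * F p) 2 muZ :=
        (Lp.memLp (C g)).ae_eq hCg
      have hHtoLp : hHmem.toLp _ = C g := Lp.ext (hHmem.coeFn_toLp.trans hCg.symm)
      have hUtCg : ⇑(Ut (C g)) =ᵐ[muZ] fun p : ℝ × ℝ =>
          ((Real.sqrt 2 : ℝ) : ℂ)⁻¹ *
            (α (2 * p.1) * F (2 * p.1, p.2 / 2) +
              Complex.exp (-(Complex.I * (p.1 : ℂ))) *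
                (α (2 * p.1) * F (2 * p.1, (p.2 + 1) / 2))) := by
        rw [← hHtoLp]; exact hUt _ hHmeas hHQP hHmem
      have hSg : ⇑(S₀ g) =ᵐ[muT] fun ω => m₀ ω * α (2 * ω) := by
        rw [← hg]; exact hS₀ α hαm hαper hα
      have hβm : Measurable (fun ω => m₀ ω * α (2 * ω)) :=
        hm_meas.mul (hαm.comp (measurable_const.mul measurable_id))
      have hβmem : MemLp (fun ω => m₀ ω * α (2 * ω)) 2 muT :=
        (Lp.memLp (S₀ g)).ae_eq hSg
      have hβtoLp : hβmem.toLp _ = S₀ g := Lp.ext (hβmem.coeFn_toLp.trans hSg.symm)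
      have hCSg : ⇑(C (S₀ g)) =ᵐ[muZ] fun p : ℝ × ℝ => (m₀ p.1 * α (2 * p.1)) * F p := by
        rw [← hβtoLp]; exact hC _ hβm hβmem
      apply Lp.ext
      refine hCSg.trans (Filter.EventuallyEq.trans ?_ hUtCg.symm)
      filter_upwards [key] with p hp
      have : m₀ p.1 * α (2 * p.1) * F p = α (2 * p.1) * (m₀ p.1 * F p) := by ring
      rw [this, hp]; ring
    · intro f hfm hfb _ g
      obtain ⟨α, hαm, _, hα, hg⟩ := rep g
      have hCg : ⇑(C g) =ᵐ[muZ] fun p : ℝ × ℝ => α p.1 * F p := by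
        rw [← hg]; exact hC α hαm hα
      have htau : ⇑(Tau f g) =ᵐ[muT] fun ω => f ω * α ω := by
        refine (hTau f hfm hfb g).trans ?_
        have hgα : ⇑g =ᵐ[muT] α := by rw [← hg]; exact hα.coeFn_toLp
        filter_upwards [hgα] with ω h; rw [h]
      have hβm : Measurable (fun ω => f ω * α ω) := hfm.mul hαm
      have hβmem : MemLp (fun ω => f ω * α ω) 2 muT :=
        (Lp.memLp (Tau f g)).ae_eq htau
      have hβtoLp : hβmem.toLp _ = Tau f g := Lp.ext (hβmem.coeFn_toLp.trans htau.symm)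
      apply Lp.ext
      have h1 : ⇑(C (Tau f g)) =ᵐ[muZ] fun p : ℝ × ℝ => (f p.1 * α p.1) * F p := by
        rw [← hβtoLp]; exact hC _ hβm hβmem
      have h2 : ⇑(PiZ f (C g)) =ᵐ[muZ] fun p : ℝ × ℝ => f p.1 * (α p.1 * F p) := by
        refine (hPiZ f hfm hfb (C g)).trans ?_
        filter_upwards [hCg] with p h; rw [h]
      refine h1.trans (Filter.EventuallyEq.trans ?_ h2.symm)
      exact Filter.Eventually.of_forall fun p => (mul_assoc _ _ _)
  · -- reverse direction
    rintro ⟨ha, hb⟩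
    have hone : MemLp (fun _ : ℝ => (1 : ℂ)) 2 muT := memLp_const 1
    set g₀ : HZ := C (hone.toLp _) with hg₀def
    set G := (Lp.aestronglyMeasurable g₀).mk ⇑g₀ with hGdef
    have hGm : Measurable G :=
      (Lp.aestronglyMeasurable g₀).stronglyMeasurable_mk.measurable
    have hg₀G : ⇑g₀ =ᵐ[muZ] G := (Lp.aestronglyMeasurable g₀).ae_eq_mk
    have hFmeas : Measurable (extQP G) := extQP_meas hGm
    have hFQP : QP (extQP G) := extQP_qp G
    have hFG : extQP G =ᵐ[muZ] G := by
      filter_upwards [muZ_ae_mem] with p hp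
      obtain ⟨h1, h2⟩ := hp
      have hc : ⌈p.2⌉ = 1 := by
        rw [Int.ceil_eq_iff]
        constructor
        · push_cast; linarith [h2.1]
        · push_cast; exact h2.2
      show Complex.exp _ * G (per p.1, p.2 - _) = G p
      rw [hc, per_eq_self h1]
      norm_num
    have hg₀F : ⇑g₀ =ᵐ[muZ] extQP G := hg₀G.trans hFG.symm
    have hF_mem : MemLp (extQP G) 2 muZ := (Lp.memLp g₀).ae_eq hg₀F
    have hFtoLp : hF_mem.toLp _ = g₀ := Lp.ext (hF_mem.coeFn_toLp.trans hg₀F.symm)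
    have mult : ∀ f : ℝ → ℂ, Measurable f → (∃ c, ∀ ω, ‖f ω‖ ≤ c) →
        (∀ ω, f (ω + 2 * π) = f ω) → ∀ hf : MemLp f 2 muT,
        ⇑(C (hf.toLp f)) =ᵐ[muZ] fun p : ℝ × ℝ => f p.1 * extQP G p := by
      intro f hfm hfb hfper hf
      have h1 : ⇑(Tau f (hone.toLp _)) =ᵐ[muT] f := by
        refine (hTau f hfm hfb _).trans ?_
        filter_upwards [hone.coeFn_toLp] with ω h
        rw [h, mul_one]
      have h2 : hf.toLp f = Tau f (hone.toLp _) :=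
        Lp.ext (hf.coeFn_toLp.trans h1.symm)
      rw [h2, hb f hfm hfb hfper]
      refine (hPiZ f hfm hfb g₀).trans ?_
      filter_upwards [hg₀F] with p h; rw [h]
    have hm2 : MemLp m₀ 2 muT := by
      obtain ⟨c, hc⟩ := hm_bdd
      exact MemLp.of_bound hm_meas.aestronglyMeasurable c (Filter.Eventually.of_forall hc)
    refine ⟨extQP G, hF_mem, hFmeas, hFQP, ?_, ?_⟩
    · -- fixed point
      have hs : ⇑(S₀ (hone.toLp _)) =ᵐ[muT] m₀ := by
        refine (hS₀ (fun _ => 1) measurable_const (fun _ => rfl) hone).trans ?_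
        exact Filter.Eventually.of_forall fun ω => mul_one _
      have hSone : S₀ (hone.toLp _) = hm2.toLp m₀ :=
        Lp.ext (hs.trans hm2.coeFn_toLp.symm)
      have hCS := ha (hone.toLp _)
      rw [hSone] at hCS
      have h3 : ⇑(C (hm2.toLp m₀)) =ᵐ[muZ] fun p : ℝ × ℝ => m₀ p.1 * extQP G p :=
        mult m₀ hm_meas hm_bdd hm_per hm2
      have h4 : ⇑(Tm g₀) =ᵐ[muZ] fun p : ℝ × ℝ => m₀ p.1 * extQP G p := by
        refine (hTm g₀).trans ?_
        filter_upwards [hg₀F] with p h; rw [h]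
      have hUtTm : Ut g₀ = Tm g₀ := by
        rw [← hCS]; exact Lp.ext (h3.trans h4.symm)
      rw [hFtoLp, ← hUtTm, LinearIsometryEquiv.symm_apply_apply]
    · -- multiplication form
      intro α hαm hα
      have hαα' : α =ᵐ[muT] fun ω => α (per ω) := by
        filter_upwards [muT_ae_mem] with ω h
        rw [per_eq_self h]
      have hα'm : Measurable (fun ω => α (per ω)) := hαm.comp measurable_per
      have hα' : MemLp (fun ω => α (per ω)) 2 muT := hα.ae_eq hαα'
      have hLp : hα.toLp α = hα'.toLp _ := (hα.toLp_eq_toLp_iff hα').mpr hαα'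
      have hχm : ∀ n : ℕ, Measurable (fun ω => if ‖α (per ω)‖ ≤ (n : ℝ)
          then (1 : ℂ) else 0) := fun n =>
        Measurable.ite (measurableSet_le hα'm.norm measurable_const)
          measurable_const measurable_const
      have hχb : ∀ n : ℕ, ∃ c, ∀ ω, ‖(if ‖α (per ω)‖ ≤ (n : ℝ) then (1 : ℂ) else 0)‖ ≤ c :=
        fun n => ⟨1, fun ω => by split <;> simp⟩
      have hχper : ∀ (n : ℕ) ω, (if ‖α (per (ω + 2 * π))‖ ≤ (n : ℝ) then (1 : ℂ) else 0)
          = if ‖α (per ω)‖ ≤ (n : ℝ) then (1 : ℂ) else 0 := fun n ω => by rw [per_add]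
      have hαnm : ∀ n : ℕ, Measurable (fun ω =>
          (if ‖α (per ω)‖ ≤ (n : ℝ) then (1 : ℂ) else 0) * α (per ω)) :=
        fun n => (hχm n).mul hα'm
      have hαnb : ∀ (n : ℕ) ω,
          ‖(if ‖α (per ω)‖ ≤ (n : ℝ) then (1 : ℂ) else 0) * α (per ω)‖ ≤ (n : ℝ) := by
        intro n ω
        split
        · next h => rw [one_mul]; exact h
        · next h => simp
      have hαnmem : ∀ n : ℕ, MemLp (fun ω =>
          (if ‖α (per ω)‖ ≤ (n : ℝ) then (1 : ℂ) else 0) * α (per ω)) 2 muT :=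
        fun n => MemLp.of_bound (hαnm n).aestronglyMeasurable n
          (Filter.Eventually.of_forall (hαnb n))
      have hαnper : ∀ (n : ℕ) ω,
          (if ‖α (per (ω + 2 * π))‖ ≤ (n : ℝ) then (1 : ℂ) else 0) * α (per (ω + 2 * π))
          = (if ‖α (per ω)‖ ≤ (n : ℝ) then (1 : ℂ) else 0) * α (per ω) :=
        fun n ω => by rw [per_add]
      have hTauχ : ∀ n : ℕ, Tau (fun ω => if ‖α (per ω)‖ ≤ (n : ℝ) then (1 : ℂ) else 0)
          (hα'.toLp _) = (hαnmem n).toLp _ := by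
        intro n
        refine Lp.ext (Filter.EventuallyEq.trans ?_ (hαnmem n).coeFn_toLp.symm)
        refine (hTau _ (hχm n) (hχb n) _).trans ?_
        filter_upwards [hα'.coeFn_toLp] with ω h
        rw [h]
      have key2 : ∀ n : ℕ, (fun p : ℝ × ℝ =>
          (if ‖α (per p.1)‖ ≤ (n : ℝ) then (1 : ℂ) else 0) * (C (hα'.toLp _)) p)
          =ᵐ[muZ] fun p : ℝ × ℝ =>
          ((if ‖α (per p.1)‖ ≤ (n : ℝ) then (1 : ℂ) else 0) * α (per p.1)) * extQP G p := by
        intro n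
        refine (hPiZ _ (hχm n) (hχb n) (C (hα'.toLp _))).symm.trans ?_
        rw [← hb _ (hχm n) (hχb n) (hχper n) (hα'.toLp _), hTauχ n]
        exact mult _ (hαnm n) ⟨n, hαnb n⟩ (hαnper n) (hαnmem n)
      have hall : ∀ᵐ p ∂muZ, ∀ n : ℕ,
          (if ‖α (per p.1)‖ ≤ (n : ℝ) then (1 : ℂ) else 0) * (C (hα'.toLp _)) p
          = ((if ‖α (per p.1)‖ ≤ (n : ℝ) then (1 : ℂ) else 0) * α (per p.1)) * extQP G p :=
        ae_all_iff.mpr key2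
      rw [hLp]
      filter_upwards [hall, muZ_ae_mem] with p hp hmem
      have hle : ‖α (per p.1)‖ ≤ (⌈‖α (per p.1)‖⌉₊ : ℝ) := Nat.le_ceil _
      have := hp ⌈‖α (per p.1)‖⌉₊
      rw [if_pos hle, one_mul, one_mul] at this
      rw [this, per_eq_self hmem.1]

end
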